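/- (Tweedie's formula) Let μ ~ F be a random variable with compactly supported distribution F on ℝ, and Y | μ ~ N(μ, 1). Let m(y) = ∫ φ(y-θ) dF(θ) be the marginal density of Y. Then the posterior mean satisfies E[μ | Y=y] = y + (d/dy) log m(y) for every real y. -/

import Mathlib

open MeasureTheory Real

/-- Standard normal density. -/
noncomputable def stdNormalPDF (x : ℝ) : ℝ := (Real.sqrt (2 * π))⁻¹ * Real.exp (-x ^ 2 / 2)

lemma sqrt2pi_pos : 0 < Real.sqrt (2 * π) := Real.sqrt_pos.mpr (by positivity)

lemma stdNormalPDF_pos (x : ℝ) : 0 < stdNormalPDF x := by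
  unfold stdNormalPDF
  positivity

lemma stdNormalPDF_le (x : ℝ) : stdNormalPDF x ≤ (Real.sqrt (2 * π))⁻¹ := by
  unfold stdNormalPDF
  nth_rewrite 2 [← mul_one (Real.sqrt (2 * π))⁻¹]
  gcongr
  exact Real.exp_le_one_iff.mpr (by nlinarith [sq_nonneg x])

lemma abs_mul_stdNormalPDF_le (x : ℝ) : |x| * stdNormalPDF x ≤ (Real.sqrt (2 * π))⁻¹ := by
  unfold stdNormalPDF
  rw [← mul_assoc, mul_comm |x| _, mul_assoc]
  nth_rewrite 2 [← mul_one (Real.sqrt (2 * π))⁻¹]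
  gcongr
  · -- |x| * exp(-x²/2) ≤ 1, since |x| ≤ exp(x²/2)
    have h1 : |x| ≤ Real.exp (x ^ 2 / 2) := by
      have := Real.add_one_le_exp (x ^ 2 / 2)
      nlinarith [sq_nonneg (|x| - 1), sq_abs x]
    calc |x| * Real.exp (-x ^ 2 / 2) ≤ Real.exp (x ^ 2 / 2) * Real.exp (-x ^ 2 / 2) := by
          gcongr
      _ = 1 := by rw [← Real.exp_add]
                  norm_num [Real.exp_zero]
                  ring

lemma hasDerivAt_stdNormalPDF (θ x : ℝ) :
    HasDerivAt (fun t => stdNormalPDF (t - θ)) ((θ - x) * stdNormalPDF (x - θ)) x := by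
  have h1 : HasDerivAt (fun t : ℝ => -(t - θ) ^ 2 / 2) (-(x - θ)) x := by
    have : HasDerivAt (fun t : ℝ => t - θ) 1 x := (hasDerivAt_id x).sub_const θ
    have h2 := ((this.pow 2).neg.div_const 2)
    exact h2.congr_deriv (by norm_num; ring)
  have h3 := (h1.exp).const_mul (Real.sqrt (2 * π))⁻¹
  unfold stdNormalPDF
  exact h3.congr_deriv (by ring)

theorem tweedie_formula (F : Measure ℝ) [IsProbabilityMeasure F]
    (B : ℝ) (hsupp : F (Set.Icc (-B) B)ᶜ = 0) (y : ℝ) :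
    (∫ θ, θ * stdNormalPDF (y - θ) ∂F) / (∫ θ, stdNormalPDF (y - θ) ∂F)
      = y + deriv (fun x => Real.log (∫ θ, stdNormalPDF (x - θ) ∂F)) y := by
  have hC : (0:ℝ) < (Real.sqrt (2 * π))⁻¹ := inv_pos.mpr sqrt2pi_pos
  -- measurability
  have hmeas : ∀ x : ℝ, AEStronglyMeasurable (fun θ => stdNormalPDF (x - θ)) F := by
    intro x
    exact (Continuous.aestronglyMeasurable (by unfold stdNormalPDF; continuity))
  -- integrability of the density
  have hint : ∀ x : ℝ, Integrable (fun θ => stdNormalPDF (x - θ)) F := by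
    intro x
    refine Integrable.mono' (integrable_const ((Real.sqrt (2 * π))⁻¹)) (hmeas x) ?_
    filter_upwards with θ
    rw [Real.norm_eq_abs, abs_of_pos (stdNormalPDF_pos _)]
    exact stdNormalPDF_le _
  -- integrability of θ ↦ (θ - x) * pdf
  have hint' : ∀ x : ℝ, Integrable (fun θ => (θ - x) * stdNormalPDF (x - θ)) F := by
    intro x
    refine Integrable.mono' (integrable_const ((Real.sqrt (2 * π))⁻¹)) ?_ ?_
    · exact Continuous.aestronglyMeasurable (by unfold stdNormalPDF; continuity)
    · filter_upwards with θ
      rw [Real.norm_eq_abs, abs_mul, abs_of_pos (stdNormalPDF_pos _)]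
      have : |θ - x| = |x - θ| := abs_sub_comm θ x
      rw [this]
      exact abs_mul_stdNormalPDF_le _
  -- positivity of the marginal
  have hpos : ∀ x : ℝ, 0 < ∫ θ, stdNormalPDF (x - θ) ∂F := by
    intro x
    rw [integral_pos_iff_support_of_nonneg_ae]
    · have : (Function.support fun θ => stdNormalPDF (x - θ)) = Set.univ := by
        ext θ; simp [Function.mem_support, (stdNormalPDF_pos (x - θ)).ne']
      rw [this]
      simp
    · filter_upwards with θ; exact (stdNormalPDF_pos _).le
    · exact hint x
  -- derivative of the marginal
  have hderiv : HasDerivAt (fun x => ∫ θ, stdNormalPDF (x - θ) ∂F)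
      (∫ θ, (θ - y) * stdNormalPDF (y - θ) ∂F) y := by
    have := hasDerivAt_integral_of_dominated_loc_of_deriv_le (μ := F)
      (F := fun x θ => stdNormalPDF (x - θ))
      (F' := fun x θ => (θ - x) * stdNormalPDF (x - θ))
      (x₀ := y) (bound := fun _ => (Real.sqrt (2 * π))⁻¹) (s := Metric.ball y 1)
      (Metric.ball_mem_nhds y one_pos)
      (Filter.Eventually.of_forall fun x => hmeas x)
      (hint y)
      ((hint' y).aestronglyMeasurable)
      ?_ (integrable_const _) ?_
    · exact this.2
    · filter_upwards with θ x _
      rw [Real.norm_eq_abs, abs_mul, abs_of_pos (stdNormalPDF_pos _), abs_sub_comm]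
      exact abs_mul_stdNormalPDF_le _
    · filter_upwards with θ x _
      exact hasDerivAt_stdNormalPDF θ x
  -- derivative of log marginal
  have hlog : deriv (fun x => Real.log (∫ θ, stdNormalPDF (x - θ) ∂F)) y
      = (∫ θ, (θ - y) * stdNormalPDF (y - θ) ∂F) / (∫ θ, stdNormalPDF (y - θ) ∂F) :=
    (hderiv.log (hpos y).ne').deriv
  rw [hlog]
  have hsplit : (∫ θ, (θ - y) * stdNormalPDF (y - θ) ∂F)
      = (∫ θ, θ * stdNormalPDF (y - θ) ∂F) - y * (∫ θ, stdNormalPDF (y - θ) ∂F) := by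
    rw [← integral_const_mul, ← integral_sub]
    · congr 1; ext θ; ring
    · -- θ * pdf integrable
      have h := (hint' y).add ((hint y).const_mul y)
      refine h.congr ?_
      filter_upwards with θ; simp only [Pi.add_apply]; ring
    · exact (hint y).const_mul y
  rw [hsplit]
  have hne := (hpos y).ne'
  field_simp
  ring
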